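/- Let $J$ be a random index in $\{1,\dots,n+1\}$ with $\mathbb{P}(J=k) = \omega_k$, where $\omega_k > 0$ sum to 1, and let $r_1,\dots,r_{n+1}$ be distinct reals. Let $q = \mathrm{Quantile}_{1-\alpha}(\sum_k \omega_k \delta_{r_k})$. Then $1 - \alpha \le \mathbb{P}(r_J \le q) \le 1 - \alpha + \omega_{\max}$, where $\omega_{\max} = \max_k \omega_k$. -/

import Mathlib

open MeasureTheory

/-- two-sided finite-sample guarantee for weighted conformal
quantiles with distinct scores: if `ℙ(J = k) = ω k` with positive weights
summing to 1, distinct reals `r k`, and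
`q = Quantile_{1-α}(∑ ω k δ_{r k})`, then
`1 - α ≤ ℙ(r J ≤ q) ≤ 1 - α + ω_max`. -/
theorem weighted_conformal_two_sided {Ω : Type*} [MeasurableSpace Ω]
    (P : Measure Ω) [IsProbabilityMeasure P]
    (n : ℕ) (J : Ω → Fin (n + 1))
    (ω : Fin (n + 1) → ℝ) (hω0 : ∀ k, 0 < ω k) (hω1 : ∑ k, ω k = 1)
    (hJ : ∀ k, P {x | J x = k} = ENNReal.ofReal (ω k))
    (r : Fin (n + 1) → ℝ) (hr : Function.Injective r)
    (α : ℝ) (hα : α ∈ Set.Ioo (0 : ℝ) 1)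
    (q : ℝ) (hq : q = sInf {t : ℝ | 1 - α ≤ ∑ k, if r k ≤ t then ω k else 0}) :
    ENNReal.ofReal (1 - α) ≤ P {x | r (J x) ≤ q} ∧
    P {x | r (J x) ≤ q} ≤
      ENNReal.ofReal (1 - α + Finset.univ.sup' Finset.univ_nonempty ω) := by
  obtain ⟨hα0, hα1⟩ := hα
  set F : ℝ → ℝ := fun t => ∑ k, if r k ≤ t then ω k else 0 with hFdef
  set S : Set ℝ := {t : ℝ | 1 - α ≤ F t} with hSdef
  have hq' : q = sInf S := hq
  -- F is monotone
  have hFmono : Monotone F := by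
    intro s t hst
    apply Finset.sum_le_sum
    intro k _
    by_cases h : r k ≤ s
    · simp [h, h.trans hst]
    · by_cases h' : r k ≤ t
      · simp [h, h', (hω0 k).le]
      · simp [h, h']
  -- S is nonempty
  have hSne : S.Nonempty := by
    refine ⟨Finset.univ.sup' Finset.univ_nonempty r, ?_⟩
    have hall : ∀ k : Fin (n + 1), r k ≤ Finset.univ.sup' Finset.univ_nonempty r :=
      fun k => Finset.le_sup' r (Finset.mem_univ k)
    have h1 : F (Finset.univ.sup' Finset.univ_nonempty r) = 1 := by
      rw [hFdef]
      simp only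
      rw [Finset.sum_congr rfl (fun k _ => if_pos (hall k))]
      exact hω1
    simp only [hSdef, Set.mem_setOf_eq, h1]
    linarith
  -- S is bounded below
  have hSbdd : BddBelow S := by
    refine ⟨Finset.univ.inf' Finset.univ_nonempty r, fun t ht => ?_⟩
    by_contra hlt
    push_neg at hlt
    have hnone : ∀ k : Fin (n + 1), ¬ r k ≤ t := by
      intro k hk
      exact absurd (le_trans (Finset.inf'_le r (Finset.mem_univ k)) hk) (not_le.mpr hlt)
    have h0 : F t = 0 := by
      rw [hFdef]; simp only
      rw [Finset.sum_congr rfl (fun k _ => if_neg (hnone k))]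
      simp
    have ht' : 1 - α ≤ F t := ht
    rw [h0] at ht'
    linarith
  -- q ∈ S, i.e. 1 - α ≤ F q
  have hqS : 1 - α ≤ F q := by
    set A : Finset (Fin (n + 1)) := Finset.univ.filter (fun k => q < r k) with hAdef
    rcases A.eq_empty_or_nonempty with hA | hA
    · -- all r k ≤ q
      have hall : ∀ k : Fin (n + 1), r k ≤ q := by
        intro k
        by_contra h
        have hk : k ∈ A := by simp [hAdef, lt_of_not_ge h]
        simp [hA] at hk
      have h1 : F q = 1 := by
        rw [hFdef]; simp only
        rw [Finset.sum_congr rfl (fun k _ => if_pos (hall k))]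
        exact hω1
      rw [h1]; linarith
    · set m := A.inf' hA r with hmdef
      have hqm : q < m := by
        rw [hmdef]
        apply (Finset.lt_inf'_iff hA).mpr
        intro k hk
        exact (Finset.mem_filter.mp hk).2
      set t' := (q + m) / 2 with ht'def
      have hqt' : q < t' := by rw [ht'def]; linarith
      have ht'm : t' < m := by rw [ht'def]; linarith
      have hFt' : F t' = F q := by
        rw [hFdef]; simp only
        apply Finset.sum_congr rfl
        intro k _
        by_cases h : r k ≤ q
        · rw [if_pos (h.trans hqt'.le), if_pos h]
        · have hk : k ∈ A := by simp [hAdef, lt_of_not_ge h]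
          have hm : m ≤ r k := Finset.inf'_le r hk
          rw [if_neg (not_le.mpr (lt_of_lt_of_le ht'm hm)), if_neg h]
      have : sInf S < t' := hq' ▸ hqt'
      obtain ⟨s, hsS, hst'⟩ := (csInf_lt_iff hSbdd hSne).mp this
      have : 1 - α ≤ F s := hsS
      calc 1 - α ≤ F s := this
        _ ≤ F t' := hFmono hst'.le
        _ = F q := hFt'
  -- B : indices with r k ≤ q
  set B : Finset (Fin (n + 1)) := Finset.univ.filter (fun k => r k ≤ q) with hBdef
  have hFqB : F q = ∑ k ∈ B, ω k := by
    rw [hFdef, hBdef]; simp only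
    rw [Finset.sum_filter]
  have hBne : B.Nonempty := by
    by_contra h
    rw [Finset.not_nonempty_iff_eq_empty] at h
    rw [h, Finset.sum_empty] at hFqB
    rw [hFqB] at hqS
    linarith
  -- choose j ∈ B with maximal r j
  obtain ⟨j, hjB, hjmax⟩ := B.exists_max_image r hBne
  have hjq : r j ≤ q := (Finset.mem_filter.mp hjB).2
  -- sum over B.erase j is < 1 - α
  have herase : ∑ k ∈ B.erase j, ω k < 1 - α := by
    rcases (B.erase j).eq_empty_or_nonempty with he | he
    · rw [he, Finset.sum_empty]; linarith
    · obtain ⟨k₀, hk₀, hk₀max⟩ := (B.erase j).exists_max_image r he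
      set t := r k₀ with htdef
      have hk₀B : k₀ ∈ B := Finset.mem_of_mem_erase hk₀
      have hk₀j : k₀ ≠ j := Finset.ne_of_mem_erase hk₀
      have htlt : t < r j :=
        lt_of_le_of_ne (hjmax k₀ hk₀B) (fun h => hk₀j (hr h))
      have htq : t < q := lt_of_lt_of_le htlt hjq
      have htS : ¬ (1 - α ≤ F t) := by
        intro hcon
        have := csInf_le hSbdd (show t ∈ S from hcon)
        rw [← hq'] at this
        linarith
      push_neg at htS
      have hFt : F t = ∑ k ∈ B.erase j, ω k := by
        rw [hFdef]; simp only
        rw [← Finset.sum_filter]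
        apply Finset.sum_congr _ (fun _ _ => rfl)
        ext k
        simp only [Finset.mem_filter, Finset.mem_univ, true_and, Finset.mem_erase]
        constructor
        · intro hk
          have hkq : r k ≤ q := hk.trans htq.le
          have hkj : k ≠ j := by
            intro h; rw [h] at hk; exact absurd hk (not_le.mpr htlt)
          exact ⟨hkj, Finset.mem_filter.mpr ⟨Finset.mem_univ k, hkq⟩⟩
        · intro ⟨hkj, hkB⟩
          exact hk₀max k (Finset.mem_erase.mpr ⟨hkj, hkB⟩)
      rw [← hFt]; exact htS
  have hωmax : ω j ≤ Finset.univ.sup' Finset.univ_nonempty ω :=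
    Finset.le_sup' ω (Finset.mem_univ j)
  have hFq_upper : F q ≤ 1 - α + Finset.univ.sup' Finset.univ_nonempty ω := by
    have hsum : F q = ω j + ∑ k ∈ B.erase j, ω k := by
      rw [hFqB, Finset.add_sum_erase B ω hjB]
    rw [hsum]; linarith
  -- Measure computation
  have hset : {x | r (J x) ≤ q} = ⋃ k ∈ B, {x | J x = k} := by
    ext x
    simp only [Set.mem_setOf_eq, Set.mem_iUnion, hBdef, Finset.mem_filter,
      Finset.mem_univ, true_and]
    constructor
    · intro h; exact ⟨J x, h, rfl⟩
    · rintro ⟨k, hk, rfl⟩; exact hk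
  have hsetc : {x | r (J x) ≤ q}ᶜ = ⋃ k ∈ Bᶜ, {x | J x = k} := by
    ext x
    simp only [Set.mem_compl_iff, Set.mem_setOf_eq, Set.mem_iUnion, hBdef,
      Finset.mem_compl, Finset.mem_filter, Finset.mem_univ, true_and]
    constructor
    · intro h; exact ⟨J x, h, rfl⟩
    · rintro ⟨k, hk, rfl⟩; exact hk
  have hPupper : P {x | r (J x) ≤ q} ≤ ENNReal.ofReal (F q) := by
    rw [hset]
    calc P (⋃ k ∈ B, {x | J x = k}) ≤ ∑ k ∈ B, P {x | J x = k} :=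
          measure_biUnion_finset_le B _
      _ = ∑ k ∈ B, ENNReal.ofReal (ω k) := Finset.sum_congr rfl (fun k _ => hJ k)
      _ = ENNReal.ofReal (∑ k ∈ B, ω k) :=
          (ENNReal.ofReal_sum_of_nonneg (fun k _ => (hω0 k).le)).symm
      _ = ENNReal.ofReal (F q) := by rw [hFqB]
  have hPcupper : P {x | r (J x) ≤ q}ᶜ ≤ ENNReal.ofReal (∑ k ∈ Bᶜ, ω k) := by
    rw [hsetc]
    calc P (⋃ k ∈ Bᶜ, {x | J x = k}) ≤ ∑ k ∈ Bᶜ, P {x | J x = k} :=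
          measure_biUnion_finset_le Bᶜ _
      _ = ∑ k ∈ Bᶜ, ENNReal.ofReal (ω k) := Finset.sum_congr rfl (fun k _ => hJ k)
      _ = ENNReal.ofReal (∑ k ∈ Bᶜ, ω k) :=
          (ENNReal.ofReal_sum_of_nonneg (fun k _ => (hω0 k).le)).symm
  have hsplit : (∑ k ∈ B, ω k) + ∑ k ∈ Bᶜ, ω k = 1 := by
    rw [Finset.sum_add_sum_compl]; exact hω1
  have hPlower : ENNReal.ofReal (F q) ≤ P {x | r (J x) ≤ q} := by
    have h1 : (1 : ENNReal) ≤ P {x | r (J x) ≤ q} + P {x | r (J x) ≤ q}ᶜ := by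
      have := measure_union_le (μ := P) {x | r (J x) ≤ q} {x | r (J x) ≤ q}ᶜ
      rw [Set.union_compl_self] at this
      simpa using this
    have h2 : (1 : ENNReal) ≤ P {x | r (J x) ≤ q} + ENNReal.ofReal (∑ k ∈ Bᶜ, ω k) :=
      h1.trans (add_le_add_right hPcupper _)
    have h3 : ENNReal.ofReal (F q) + ENNReal.ofReal (∑ k ∈ Bᶜ, ω k) = 1 := by
      rw [← ENNReal.ofReal_add (by rw [hFqB]; exact Finset.sum_nonneg fun k _ => (hω0 k).le)
        (Finset.sum_nonneg fun k _ => (hω0 k).le)]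
      rw [hFqB, hsplit, ENNReal.ofReal_one]
    have h4 : ENNReal.ofReal (F q) + ENNReal.ofReal (∑ k ∈ Bᶜ, ω k) ≤
        P {x | r (J x) ≤ q} + ENNReal.ofReal (∑ k ∈ Bᶜ, ω k) := by
      rw [h3]; exact h2
    exact ENNReal.le_of_add_le_add_right ENNReal.ofReal_ne_top h4
  constructor
  · exact le_trans (ENNReal.ofReal_le_ofReal hqS) hPlower
  · exact hPupper.trans (ENNReal.ofReal_le_ofReal hFq_upper)
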